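/- Let ν > 0, b, b̃ > 0, and δ > 0. Then the function ω ↦ ( ((b̃² + ω²) / (b² + ω²))^{ν + 1/2} − 1 )² is Lebesgue integrable on the interval (δ, ∞). (This is the sufficiency direction of the integral test for equivalence: when the microergodic parameters agree, the squared relative difference of the two spectral densities has finite tail integral.) -/

import Mathlib

open MeasureTheory Set

/-- Sufficiency direction of the integral test for equivalence of GPlag/LMat models:
for any `ν > 0`, lengthscales `b, b̃ > 0` and `δ > 0`, the squared relative difference
`(((b̃²+ω²)/(b²+ω²))^{ν+1/2} - 1)²` of the two spectral densities is Lebesgue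
integrable on `(δ, ∞)`. -/
theorem matern_spectral_ratio_tail_integrable (ν b bt δ : ℝ)
    (hν : 0 < ν) (hb : 0 < b) (hbt : 0 < bt) (hδ : 0 < δ) :
    IntegrableOn
      (fun ω : ℝ => (((bt ^ 2 + ω ^ 2) / (b ^ 2 + ω ^ 2)) ^ (ν + 1 / 2) - 1) ^ 2)
      (Ioi δ) volume := by
  set p : ℝ := ν + 1 / 2 with hpdef
  have hp0 : 0 < p := by simp only [hpdef]; linarith
  set m : ℝ := bt ^ 2 / (bt ^ 2 + b ^ 2) with hmdef
  set M : ℝ := 1 + bt ^ 2 / b ^ 2 with hMdef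
  have hm0 : 0 < m := by positivity
  have hm1 : m ≤ 1 := by
    rw [hmdef, div_le_one (by positivity)]; nlinarith
  have hM1 : 1 ≤ M := by
    rw [hMdef]; nlinarith [sq_nonneg bt, sq_nonneg b, div_nonneg (sq_nonneg bt) (sq_nonneg b)]
  set L : ℝ := p * (m ^ (p - 1) + M ^ (p - 1)) with hLdef
  have hL0 : 0 ≤ L := by positivity
  -- MVT-based estimate on Icc m M
  have key : ∀ u ∈ Icc m M, |u ^ p - 1| ≤ L * |u - 1| := by
    intro u hu
    have h1 : (1 : ℝ) ∈ Icc m M := ⟨hm1, hM1⟩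
    have hderiv : ∀ x ∈ Icc m M,
        HasDerivWithinAt (fun y : ℝ => y ^ p) (p * x ^ (p - 1)) (Icc m M) x := by
      intro x hx
      exact (Real.hasDerivAt_rpow_const (Or.inl (ne_of_gt (lt_of_lt_of_le hm0 hx.1)))).hasDerivWithinAt
    have hbound : ∀ x ∈ Icc m M, ‖p * x ^ (p - 1)‖ ≤ L := by
      intro x hx
      have hx0 : 0 < x := lt_of_lt_of_le hm0 hx.1
      have hxp : (0:ℝ) ≤ x ^ (p - 1) := Real.rpow_nonneg hx0.le _
      rw [Real.norm_eq_abs, abs_of_nonneg (by positivity)]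
      rcases le_or_gt 1 p with hp1 | hp1
      · have : x ^ (p - 1) ≤ M ^ (p - 1) :=
          Real.rpow_le_rpow hx0.le hx.2 (by linarith)
        have hmn : (0:ℝ) ≤ m ^ (p - 1) := Real.rpow_nonneg hm0.le _
        rw [hLdef]
        nlinarith
      · have : x ^ (p - 1) ≤ m ^ (p - 1) :=
          Real.rpow_le_rpow_of_nonpos hm0 hx.1 (by linarith)
        have hMn : (0:ℝ) ≤ M ^ (p - 1) := Real.rpow_nonneg (by linarith) _
        rw [hLdef]
        nlinarith
    have := (convex_Icc m M).norm_image_sub_le_of_norm_hasDerivWithin_le hderiv hbound h1 hu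
    simpa [Real.norm_eq_abs, Real.one_rpow] using this
  set c : ℝ := |bt ^ 2 - b ^ 2| with hcdef
  have hc0 : 0 ≤ c := abs_nonneg _
  -- dominating function
  have hg : IntegrableOn (fun ω : ℝ => (L * c) ^ 2 * ω ^ (-4 : ℝ)) (Ioi δ) volume :=
    (integrableOn_Ioi_rpow_of_lt (by norm_num) hδ).const_mul _
  refine Integrable.mono' hg ?_ ?_
  · -- measurability
    apply ContinuousOn.aestronglyMeasurable _ measurableSet_Ioi
    intro ω _
    have hpos : (0:ℝ) < (bt ^ 2 + ω ^ 2) / (b ^ 2 + ω ^ 2) := by positivity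
    have hdiv : ContinuousAt (fun ω : ℝ => (bt ^ 2 + ω ^ 2) / (b ^ 2 + ω ^ 2)) ω :=
      ContinuousAt.div
        ((continuous_const.add (continuous_pow 2)).continuousAt)
        ((continuous_const.add (continuous_pow 2)).continuousAt)
        (by positivity)
    exact ContinuousAt.continuousWithinAt <| ContinuousAt.pow
      (ContinuousAt.sub (ContinuousAt.rpow_const hdiv (Or.inl hpos.ne')) continuousAt_const) 2
  · filter_upwards [ae_restrict_mem measurableSet_Ioi] with ω hω
    have hω0 : 0 < ω := lt_trans hδ hω
    set u : ℝ := (bt ^ 2 + ω ^ 2) / (b ^ 2 + ω ^ 2) with hudef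
    have hden : (0:ℝ) < b ^ 2 + ω ^ 2 := by positivity
    have hum : m ≤ u := by
      rw [hmdef, hudef, div_le_div_iff₀ (by positivity) hden]; nlinarith
    have huM : u ≤ M := by
      rw [hMdef, hudef, div_le_iff₀ hden]
      have hcancel : bt ^ 2 / b ^ 2 * b ^ 2 = bt ^ 2 :=
        div_mul_cancel₀ _ (ne_of_gt (pow_pos hb 2))
      nlinarith [mul_nonneg (div_nonneg (sq_nonneg bt) (sq_nonneg b)) (sq_nonneg ω)]
    have h1 : |u ^ p - 1| ≤ L * |u - 1| := key u ⟨hum, huM⟩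
    have h2 : |u - 1| ≤ c / ω ^ 2 := by
      have : u - 1 = (bt ^ 2 - b ^ 2) / (b ^ 2 + ω ^ 2) := by
        field_simp [hudef]
        rw [hudef, sub_mul, div_mul_cancel₀ _ hden.ne']; ring
      rw [this, abs_div, abs_of_pos hden, div_le_div_iff₀ hden (by positivity)]
      nlinarith [abs_nonneg (bt ^ 2 - b ^ 2)]
    have h3 : |u ^ p - 1| ≤ L * c / ω ^ 2 := by
      calc |u ^ p - 1| ≤ L * (c / ω ^ 2) := h1.trans (by
            exact mul_le_mul_of_nonneg_left h2 hL0)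
        _ = L * c / ω ^ 2 := by ring
    have hrw : ω ^ (-4 : ℝ) = ((ω ^ 2) * (ω ^ 2))⁻¹ := by
      rw [show (-4 : ℝ) = -(4 : ℕ) by norm_num, Real.rpow_neg hω0.le,
        Real.rpow_natCast]
      ring_nf
    rw [Real.norm_eq_abs, hrw]
    have habs : |(u ^ p - 1) ^ 2| = |u ^ p - 1| ^ 2 := by
      rw [abs_pow]
    rw [habs]
    have hω2 : (0:ℝ) < ω ^ 2 := by positivity
    have := mul_le_mul h3 h3 (abs_nonneg _) (by positivity)
    calc |u ^ p - 1| ^ 2 = |u ^ p - 1| * |u ^ p - 1| := by ring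
      _ ≤ (L * c / ω ^ 2) * (L * c / ω ^ 2) := this
      _ = (L * c) ^ 2 * ((ω ^ 2) * (ω ^ 2))⁻¹ := by field_simp
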